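/- Let a₀, b₀, c₀ ∈ ℝ with b₀ ≠ 0 and b₀ ≠ 1. Define Λ(t) := (1−2b₀)²/(4((t+a₀)² + b₀²)((t+a₀)² + (b₀−1)²)), H(t) := ln[((t+a₀)² + (b₀−1)²)/((t+a₀)² + b₀²)], and F(n,t) := Λ(t)·sech²((n/2)H(t) + 2c₀). Then 0 ≤ F(n,t) ≤ Λ(t) for all n, t ∈ ℝ, and Λ(t) → 0 as t → +∞ and as t → −∞; consequently F(n,t) → 0 as t → ±∞, uniformly in n. -/

import Mathlib

open Filter

/-- Temporal localization of the 1-soliton: `0 ≤ F(n,t) ≤ Λ(t)`, the time-varying amplitude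
`Λ(t)` decays to `0` as `t → ±∞`, and consequently `F(n,t) → 0` as `t → ±∞`, uniformly
in `n`. -/
theorem one_soliton_temporal_decay (a₀ b₀ c₀ : ℝ) (hb0 : b₀ ≠ 0) (hb1 : b₀ ≠ 1)
    (H Λ : ℝ → ℝ) (F : ℝ → ℝ → ℝ)
    (hH : ∀ t : ℝ, H t = Real.log
      (((t + a₀) ^ 2 + (b₀ - 1) ^ 2) / ((t + a₀) ^ 2 + b₀ ^ 2)))
    (hΛ : ∀ t : ℝ, Λ t = (1 - 2 * b₀) ^ 2
      / (4 * ((t + a₀) ^ 2 + b₀ ^ 2) * ((t + a₀) ^ 2 + (b₀ - 1) ^ 2)))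
    (hF : ∀ n t : ℝ, F n t = Λ t * (1 / Real.cosh ((n / 2) * H t + 2 * c₀)) ^ 2) :
    (∀ n t : ℝ, 0 ≤ F n t ∧ F n t ≤ Λ t)
    ∧ Tendsto Λ atTop (nhds 0) ∧ Tendsto Λ atBot (nhds 0)
    ∧ TendstoUniformly (fun t (n : ℝ) => F n t) (fun _ => 0) atTop
    ∧ TendstoUniformly (fun t (n : ℝ) => F n t) (fun _ => 0) atBot := by
  have hX : ∀ t : ℝ, 0 < (t + a₀) ^ 2 + b₀ ^ 2 := fun t => by positivity
  have hY : ∀ t : ℝ, 0 < (t + a₀) ^ 2 + (b₀ - 1) ^ 2 := fun t => by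
    have : b₀ - 1 ≠ 0 := sub_ne_zero.mpr hb1
    positivity
  have hΛ0 : ∀ t : ℝ, 0 ≤ Λ t := fun t => by
    rw [hΛ]
    have := hX t; have := hY t
    positivity
  have hbound : ∀ n t : ℝ, 0 ≤ F n t ∧ F n t ≤ Λ t := by
    intro n t
    have hc : 1 ≤ Real.cosh ((n / 2) * H t + 2 * c₀) := Real.one_le_cosh _
    have hs : (1 / Real.cosh ((n / 2) * H t + 2 * c₀)) ^ 2 ≤ 1 := by
      have h1 : 1 / Real.cosh ((n / 2) * H t + 2 * c₀) ≤ 1 := by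
        rw [div_le_one (lt_of_lt_of_le one_pos hc)]; exact hc
      have h0 : 0 ≤ 1 / Real.cosh ((n / 2) * H t + 2 * c₀) := by positivity
      nlinarith
    constructor
    · rw [hF]
      have h0 : (0:ℝ) ≤ (1 / Real.cosh ((n / 2) * H t + 2 * c₀)) ^ 2 := by positivity
      exact mul_nonneg (hΛ0 t) h0
    · rw [hF]
      calc Λ t * (1 / Real.cosh ((n / 2) * H t + 2 * c₀)) ^ 2 ≤ Λ t * 1 :=
            mul_le_mul_of_nonneg_left hs (hΛ0 t)
        _ = Λ t := mul_one _
  -- denominator tends to atTop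
  have hden : ∀ l : Filter ℝ, Tendsto (fun t : ℝ => |t + a₀|) l atTop →
      Tendsto Λ l (nhds 0) := by
    intro l habs
    have hsq : Tendsto (fun t : ℝ => (t + a₀) ^ 2) l atTop := by
      have : Tendsto (fun t : ℝ => |t + a₀| ^ 2) l atTop :=
        habs.atTop_mul_atTop₀ habs |>.congr (by intro t; rw [sq])
      exact this.congr (by intro t; rw [sq_abs])
    have hXt : Tendsto (fun t : ℝ => (t + a₀) ^ 2 + b₀ ^ 2) l atTop :=
      tendsto_atTop_add_const_right _ _ hsq
    have hYt : Tendsto (fun t : ℝ => (t + a₀) ^ 2 + (b₀ - 1) ^ 2) l atTop :=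
      tendsto_atTop_add_const_right _ _ hsq
    have hD : Tendsto
        (fun t : ℝ => 4 * ((t + a₀) ^ 2 + b₀ ^ 2) * ((t + a₀) ^ 2 + (b₀ - 1) ^ 2))
        l atTop := by
      have h4 : Tendsto (fun t : ℝ => 4 * ((t + a₀) ^ 2 + b₀ ^ 2)) l atTop :=
        hXt.const_mul_atTop (by norm_num)
      exact h4.atTop_mul_atTop₀ hYt
    have := Tendsto.div_atTop (tendsto_const_nhds (x := (1 - 2 * b₀) ^ 2) (f := l)) hD
    exact this.congr fun t => (hΛ t).symm
  have habsTop : Tendsto (fun t : ℝ => |t + a₀|) atTop atTop :=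
    tendsto_abs_atTop_atTop.comp (tendsto_atTop_add_const_right _ _ tendsto_id)
  have habsBot : Tendsto (fun t : ℝ => |t + a₀|) atBot atTop :=
    tendsto_abs_atBot_atTop.comp (tendsto_atBot_add_const_right _ _ tendsto_id)
  have hTop := hden _ habsTop
  have hBot := hden _ habsBot
  have hunif : ∀ l : Filter ℝ, Tendsto Λ l (nhds 0) →
      TendstoUniformly (fun t (n : ℝ) => F n t) (fun _ => 0) l := by
    intro l hl
    rw [Metric.tendstoUniformly_iff]
    intro ε hε
    have hev : ∀ᶠ t in l, Λ t < ε := by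
      have := hl.eventually (gt_mem_nhds hε)
      exact this
    filter_upwards [hev] with t ht n
    rw [Real.dist_eq]
    have h := hbound n t
    rw [abs_sub_comm, abs_of_nonneg (by simpa using h.1)]
    simpa using lt_of_le_of_lt h.2 ht
  exact ⟨hbound, hTop, hBot, hunif _ hTop, hunif _ hBot⟩
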